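/- Let Ω ⊆ ℂ be a simply connected open set, let K, L be compact subsets of Ω, let s ≥ 1 be an integer and let (p,q) ∈ ℕ×ℕ. Then the set E(Ω,K,L,s,(p,q)) is open in H(Ω). -/

import Mathlib

open Filter

noncomputable def taylorCoeff (f : ℂ → ℂ) (ζ : ℂ) (v : ℕ) : ℂ :=
  iteratedDeriv v f ζ / (Nat.factorial v : ℂ)

noncomputable def coeffZ (a : ℕ → ℂ) (k : ℤ) : ℂ :=
  if 0 ≤ k then a k.toNat else 0

/-- The q×q Hankel matrix with (i,j) entry `a (p-q+1+i+j)` (value 0 for negative index). -/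
noncomputable def hankel (a : ℕ → ℂ) (p q : ℕ) : Matrix (Fin q) (Fin q) ℂ :=
  Matrix.of fun i j => coeffZ a ((p : ℤ) - (q : ℤ) + 1 + (i.1 : ℤ) + (j.1 : ℤ))

/-- `f ∈ D_{p,q}(ζ)` for the coefficient sequence `a` of `f` at `ζ`:
either `q = 0` or the Hankel determinant is nonzero. -/
def MemD (a : ℕ → ℂ) (p q : ℕ) : Prop :=
  q = 0 ∨ (hankel a p q).det ≠ 0

/-- `Nu/De` (in the variable `w = z - ζ`) is a Padé approximant `[p/q]` of the series with
coefficients `a` : `deg Nu ≤ p`, `deg De ≤ q`, `De(0) = 1`, and the power series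
`De(w)·Σ a_v w^v − Nu(w)` has vanishing coefficients in degrees `0,…,p+q`. -/
def IsPadeAt (a : ℕ → ℂ) (p q : ℕ) (Nu De : Polynomial ℂ) : Prop :=
  Nu.natDegree ≤ p ∧ De.natDegree ≤ q ∧ De.coeff 0 = 1 ∧
    ∀ k ≤ p + q, (∑ i ∈ Finset.range (k + 1), De.coeff i * a (k - i)) = Nu.coeff k

/-- The holomorphic functions on `Ω` (as functions `ℂ → ℂ`). -/
def Hol (Ω : Set ℂ) : Set (ℂ → ℂ) := {f | DifferentiableOn ℂ f Ω}

/-- `E` is open in `H(Ω)` with the topology of uniform convergence on compacta. -/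
def HOpen (Ω : Set ℂ) (E : Set (ℂ → ℂ)) : Prop :=
  E ⊆ Hol Ω ∧ ∀ g ∈ E, ∃ T : Set ℂ, T ⊆ Ω ∧ IsCompact T ∧ ∃ δ : ℝ, 0 < δ ∧
    ∀ f ∈ Hol Ω, (∀ z ∈ T, ‖f z - g z‖ < δ) → f ∈ E

/-- `D` is dense in `H(Ω)` with the topology of uniform convergence on compacta. -/
def HDense (Ω : Set ℂ) (D : Set (ℂ → ℂ)) : Prop :=
  ∀ g ∈ Hol Ω, ∀ T : Set ℂ, T ⊆ Ω → IsCompact T → ∀ ε : ℝ, 0 < ε →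
    ∃ f ∈ D, ∀ z ∈ T, ‖f z - g z‖ < ε

/-- `S` is a Gδ subset of `H(Ω)`: a countable intersection of open subsets of `H(Ω)`. -/
def HGdelta (Ω : Set ℂ) (S : Set (ℂ → ℂ)) : Prop :=
  ∃ E : ℕ → Set (ℂ → ℂ), (∀ n, HOpen Ω (E n)) ∧ S = ⋂ n, E n

/-- A Padé approximant `[p/q]` of the series `a` centered at `ζ` has no poles in `K` and is
uniformly `ε`-close to `f` on `K`. -/
def PadeApproxOn (a : ℕ → ℂ) (ζ : ℂ) (p q : ℕ) (f : ℂ → ℂ) (K : Set ℂ) (ε : ℝ) : Prop :=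
  ∃ Nu De : Polynomial ℂ, IsPadeAt a p q Nu De ∧
    (∀ z ∈ K, Polynomial.eval (z - ζ) De ≠ 0) ∧
    ∀ z ∈ K, ‖Polynomial.eval (z - ζ) Nu / Polynomial.eval (z - ζ) De - f z‖ < ε

/-- The set `E(Ω,K,L,s,(p,q))`. -/
def ESet (Ω K L : Set ℂ) (s p q : ℕ) : Set (ℂ → ℂ) :=
  {g | DifferentiableOn ℂ g Ω ∧ ∀ ζ ∈ L,
    MemD (taylorCoeff g ζ) p q ∧ PadeApproxOn (taylorCoeff g ζ) ζ p q g K (1 / (s : ℝ))}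

/-- The set `U(Ω,F,K,L)`. -/
def USet (Ω : Set ℂ) (F : Set (ℕ × ℕ)) (K L : Set ℂ) : Set (ℂ → ℂ) :=
  {f | DifferentiableOn ℂ f Ω ∧ ∃ pq : ℕ → ℕ × ℕ, (∀ n, pq n ∈ F) ∧
    (∀ n, ∀ ζ ∈ L, MemD (taylorCoeff f ζ) (pq n).1 (pq n).2) ∧
    (∃ N : ℕ, ∀ n ≥ N, ∀ ζ ∈ L, ∃ Nu De : Polynomial ℂ,
      IsPadeAt (taylorCoeff f ζ) (pq n).1 (pq n).2 Nu De ∧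
      ∀ z ∈ K, Polynomial.eval (z - ζ) De ≠ 0) ∧
    (∀ ε : ℝ, 0 < ε → ∃ N : ℕ, ∀ n ≥ N, ∀ ζ ∈ L,
      PadeApproxOn (taylorCoeff f ζ) ζ (pq n).1 (pq n).2 f K ε)}

namespace PadeAux

/-- Finite coefficient vector version of `coeffZ`. -/
noncomputable def czv (p q : ℕ) (c : Fin (p+q+1) → ℂ) (k : ℤ) : ℂ :=
  if h : 0 ≤ k ∧ k.toNat < p+q+1 then c ⟨k.toNat, h.2⟩ else 0

/-- The coefficient vector of a sequence. -/
noncomputable def vc (p q : ℕ) (a : ℕ → ℂ) : Fin (p+q+1) → ℂ := fun i => a i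

/-- The linear-system matrix for the Padé denominator. -/
noncomputable def Mm (p q : ℕ) (c : Fin (p+q+1) → ℂ) : Matrix (Fin q) (Fin q) ℂ :=
  Matrix.of fun r i => czv p q c ((p:ℤ) + (r:ℤ) - (i:ℤ))

noncomputable def bv (p q : ℕ) (c : Fin (p+q+1) → ℂ) (r : Fin q) : ℂ :=
  czv p q c ((p:ℤ) + 1 + (r:ℤ))

/-- Denominator coefficients via Cramer's rule. -/
noncomputable def dv (p q : ℕ) (c : Fin (p+q+1) → ℂ) : Fin q → ℂ :=
  (Mm p q c).det⁻¹ • (Mm p q c).adjugate.mulVec (fun r => - bv p q c r)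

noncomputable def deC (p q : ℕ) (c : Fin (p+q+1) → ℂ) (i : ℕ) : ℂ :=
  if i = 0 then 1 else if h : i - 1 < q then dv p q c ⟨i-1, h⟩ else 0

noncomputable def DeP (p q : ℕ) (c : Fin (p+q+1) → ℂ) : Polynomial ℂ :=
  ∑ i ∈ Finset.range (q+1), Polynomial.monomial i (deC p q c i)

noncomputable def nuC (p q : ℕ) (c : Fin (p+q+1) → ℂ) (k : ℕ) : ℂ :=
  ∑ i ∈ Finset.range (k+1), deC p q c i * czv p q c ((k - i : ℕ) : ℤ)

noncomputable def NuP (p q : ℕ) (c : Fin (p+q+1) → ℂ) : Polynomial ℂ :=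
  ∑ k ∈ Finset.range (p+1), Polynomial.monomial k (nuC p q c k)

lemma czv_vc (p q : ℕ) (a : ℕ → ℂ) {m : ℕ} (hm : m < p+q+1) :
    czv p q (vc p q a) (m : ℤ) = a m := by
  have h : (0:ℤ) ≤ (m:ℤ) ∧ (m:ℤ).toNat < p+q+1 := ⟨Int.ofNat_nonneg m, by simpa using hm⟩
  unfold czv vc
  rw [dif_pos h]
  simp

lemma czv_neg (p q : ℕ) (c : Fin (p+q+1) → ℂ) {k : ℤ} (hk : k < 0) : czv p q c k = 0 := by
  rw [czv, dif_neg]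
  rintro ⟨h1, -⟩; omega

lemma czv_vc_int (p q : ℕ) (a : ℕ → ℂ) {k : ℤ} (hk : k < (p:ℤ)+(q:ℤ)+1) :
    czv p q (vc p q a) k = coeffZ a k := by
  rcases lt_or_ge k 0 with h | h
  · rw [czv_neg p q _ h, coeffZ, if_neg (by omega)]
  · obtain ⟨m, rfl⟩ := Int.eq_ofNat_of_zero_le h
    rw [czv_vc p q a (by exact_mod_cast (by omega : (m:ℤ) < (p:ℤ)+(q:ℤ)+1))]
    simp [coeffZ]

lemma Mm_vc (p q : ℕ) (a : ℕ → ℂ) :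
    Mm p q (vc p q a) = (hankel a p q).submatrix id Fin.revPerm := by
  ext r j
  have hj : (j:ℕ) + 1 ≤ q := j.isLt
  have hval : ((Fin.revPerm j : Fin q) : ℕ) = q - ((j:ℕ)+1) := rfl
  show czv p q (vc p q a) ((p:ℤ) + (r:ℤ) - (j:ℤ))
      = coeffZ a ((p : ℤ) - (q : ℤ) + 1 + (r:ℤ) + ((Fin.revPerm j : Fin q) : ℤ))
  have h1 : ((p : ℤ) - (q : ℤ) + 1 + (r:ℤ) + ((Fin.revPerm j : Fin q) : ℤ))
      = (p:ℤ) + (r:ℤ) - (j:ℤ) := by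
    have : (((Fin.revPerm j : Fin q) : ℕ) : ℤ) = (q:ℤ) - ((j:ℤ)+1) := by
      rw [hval]; push_cast [Nat.cast_sub hj]; ring
    rw [this]; ring
  rw [h1, czv_vc_int]
  have := r.isLt
  omega

lemma det_Mm_ne_iff (p q : ℕ) (a : ℕ → ℂ) :
    (Mm p q (vc p q a)).det ≠ 0 ↔ MemD a p q := by
  rcases Nat.eq_zero_or_pos q with hq | hq
  · subst hq
    constructor
    · intro _; exact Or.inl rfl
    · intro _; rw [Matrix.det_isEmpty]; exact one_ne_zero
  · rw [Mm_vc, Matrix.det_permute']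
    constructor
    · intro h; exact Or.inr fun h0 => h (by rw [h0, mul_zero])
    · rintro (h | h)
      · omega
      · refine mul_ne_zero ?_ h
        exact_mod_cast Units.ne_zero (Equiv.Perm.sign (Fin.revPerm : Equiv.Perm (Fin q)))

lemma Mm_mulVec_dv (p q : ℕ) (c : Fin (p+q+1) → ℂ) (hdet : (Mm p q c).det ≠ 0) :
    (Mm p q c).mulVec (dv p q c) = fun r => - bv p q c r := by
  unfold dv
  rw [Matrix.mulVec_smul, Matrix.mulVec_mulVec, Matrix.mul_adjugate,
    Matrix.smul_mulVec, Matrix.one_mulVec, smul_smul, inv_mul_cancel₀ hdet, one_smul]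

lemma dv_unique (p q : ℕ) (c : Fin (p+q+1) → ℂ) (hdet : (Mm p q c).det ≠ 0)
    {d : Fin q → ℂ} (hd : (Mm p q c).mulVec d = fun r => - bv p q c r) :
    d = dv p q c := by
  unfold dv
  rw [← hd, Matrix.mulVec_mulVec, Matrix.adjugate_mul, Matrix.smul_mulVec,
    Matrix.one_mulVec, smul_smul, inv_mul_cancel₀ hdet, one_smul]

lemma deC_zero (p q : ℕ) (c : Fin (p+q+1) → ℂ) : deC p q c 0 = 1 := rfl

lemma deC_hi (p q : ℕ) (c : Fin (p+q+1) → ℂ) {j : ℕ} (hj : q < j) : deC p q c j = 0 := by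
  unfold deC
  rw [if_neg (by omega), dif_neg (by omega)]

lemma coeff_DeP (p q : ℕ) (c : Fin (p+q+1) → ℂ) (m : ℕ) :
    (DeP p q c).coeff m = deC p q c m := by
  unfold DeP
  rw [Polynomial.finset_sum_coeff]
  simp only [Polynomial.coeff_monomial]
  rcases lt_or_ge m (q+1) with h | h
  · rw [Finset.sum_ite_eq' (Finset.range (q+1)) m (fun i => deC p q c i),
      if_pos (Finset.mem_range.2 h)]
  · rw [Finset.sum_eq_zero, deC_hi p q c (by omega)]
    intro i hi
    rw [if_neg]
    have := Finset.mem_range.1 hi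
    omega

lemma coeff_DeP_succ (p q : ℕ) (c : Fin (p+q+1) → ℂ) (j : Fin q) :
    (DeP p q c).coeff ((j:ℕ)+1) = dv p q c j := by
  rw [coeff_DeP]
  unfold deC
  rw [if_neg (Nat.succ_ne_zero _), dif_pos (by simp [j.isLt])]
  congr 1


lemma natDegree_DeP_le (p q : ℕ) (c : Fin (p+q+1) → ℂ) : (DeP p q c).natDegree ≤ q :=
  Polynomial.natDegree_le_iff_coeff_eq_zero.mpr fun N hN => by
    rw [coeff_DeP, deC_hi p q c hN]

lemma coeff_NuP (p q : ℕ) (c : Fin (p+q+1) → ℂ) (m : ℕ) :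
    (NuP p q c).coeff m = if m ≤ p then nuC p q c m else 0 := by
  unfold NuP
  rw [Polynomial.finset_sum_coeff]
  simp only [Polynomial.coeff_monomial]
  rcases le_or_gt m p with h | h
  · rw [Finset.sum_ite_eq' (Finset.range (p+1)) m (fun i => nuC p q c i),
      if_pos (Finset.mem_range.2 (by omega)), if_pos h]
  · rw [Finset.sum_eq_zero, if_neg (by omega)]
    intro i hi
    rw [if_neg]
    have := Finset.mem_range.1 hi
    omega

lemma natDegree_NuP_le (p q : ℕ) (c : Fin (p+q+1) → ℂ) : (NuP p q c).natDegree ≤ p :=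
  Polynomial.natDegree_le_iff_coeff_eq_zero.mpr fun N hN => by
    rw [coeff_NuP, if_neg (by omega)]

lemma eval_DeP (p q : ℕ) (c : Fin (p+q+1) → ℂ) (w : ℂ) :
    (DeP p q c).eval w = ∑ i ∈ Finset.range (q+1), deC p q c i * w ^ i := by
  unfold DeP
  rw [Polynomial.eval_finset_sum]
  simp [Polynomial.eval_monomial]

lemma eval_NuP (p q : ℕ) (c : Fin (p+q+1) → ℂ) (w : ℂ) :
    (NuP p q c).eval w = ∑ k ∈ Finset.range (p+1), nuC p q c k * w ^ k := by
  unfold NuP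
  rw [Polynomial.eval_finset_sum]
  simp [Polynomial.eval_monomial]

lemma row_sum (p q : ℕ) (a : ℕ → ℂ) {D : Polynomial ℂ} {d : Fin q → ℂ}
    (hD0 : D.coeff 0 = 1) (hDi : ∀ j : Fin q, D.coeff ((j:ℕ)+1) = d j)
    (hDhi : ∀ j : ℕ, q < j → D.coeff j = 0) (r : Fin q) :
    ∑ i ∈ Finset.range (p+1+(r:ℕ)+1), D.coeff i * a (p+1+(r:ℕ) - i)
      = a (p+1+(r:ℕ)) + ∑ j, Mm p q (vc p q a) r j * d j := by
  set k := p+1+(r:ℕ) with hk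
  have hrq : (r:ℕ) < q := r.isLt
  set h : ℕ → ℂ := fun i =>
    if hi : i < q then d ⟨i,hi⟩ * czv p q (vc p q a) ((p:ℤ)+(r:ℤ)-(i:ℤ)) else 0 with hh
  have step1 : ∑ i ∈ Finset.range (k+1), D.coeff i * a (k - i)
      = (∑ i ∈ Finset.range k, D.coeff (i+1) * a (k - (i+1))) + D.coeff 0 * a k :=
    Finset.sum_range_succ' _ _
  have step2 : ∀ i ∈ Finset.range k, D.coeff (i+1) * a (k - (i+1)) = h i := by
    intro i hi
    have hik : i < k := Finset.mem_range.1 hi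
    by_cases hiq : i < q
    · rw [hh]
      simp only [dif_pos hiq]
      rw [← hDi ⟨i, hiq⟩]
      have harg : ((k - (i+1) : ℕ) : ℤ) = (p:ℤ)+(r:ℤ)-(i:ℤ) := by
        push_cast [Nat.cast_sub (by omega : i+1 ≤ k)]
        omega
      rw [show czv p q (vc p q a) ((p:ℤ)+(r:ℤ)-(i:ℤ))
            = a (k - (i+1)) by rw [← harg, czv_vc p q a (by omega)]]
    · rw [hh]
      simp only [dif_neg hiq]
      rw [hDhi (i+1) (by omega), zero_mul]
  have hzero1 : ∀ i : ℕ, q ≤ i → h i = 0 := by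
    intro i hi
    rw [hh]; simp only [dif_neg (by omega : ¬ i < q)]
  have hzero2 : ∀ i : ℕ, k ≤ i → h i = 0 := by
    intro i hi
    rw [hh]
    by_cases hiq : i < q
    · simp only [dif_pos hiq]
      rw [czv_neg p q _ (by omega), mul_zero]
    · simp only [dif_neg hiq]
  have step3 : ∑ i ∈ Finset.range k, h i = ∑ i ∈ Finset.range q, h i := by
    rcases le_total k q with hkq | hkq
    · rw [Finset.sum_subset (Finset.range_subset_range.2 hkq)]
      intro i hi hni
      exact hzero2 i (by simpa using hni)
    · rw [← Finset.sum_subset (Finset.range_subset_range.2 hkq)]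
      intro i hi hni
      exact hzero1 i (by simpa using hni)
  have step4 : ∑ i ∈ Finset.range q, h i = ∑ j : Fin q, Mm p q (vc p q a) r j * d j := by
    rw [← Fin.sum_univ_eq_sum_range]
    refine Finset.sum_congr rfl fun j _ => ?_
    rw [hh]
    simp only [dif_pos j.isLt]
    rw [mul_comm]
    congr 1
  rw [step1, Finset.sum_congr rfl step2, step3, step4, hD0, one_mul, add_comm]

lemma bv_vc (p q : ℕ) (a : ℕ → ℂ) (r : Fin q) :
    bv p q (vc p q a) r = a (p+1+(r:ℕ)) := by
  unfold bv
  have harg : ((p+1+(r:ℕ) : ℕ) : ℤ) = (p:ℤ) + 1 + (r:ℤ) := by push_cast; ring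
  rw [← harg, czv_vc p q a (by have := r.isLt; omega)]

lemma mulVec_apply' {n : ℕ} (M : Matrix (Fin n) (Fin n) ℂ) (v : Fin n → ℂ) (r : Fin n) :
    M.mulVec v r = ∑ j, M r j * v j := rfl

lemma sum_eq_nuC (p q : ℕ) (a : ℕ → ℂ) {k : ℕ} (hk : k ≤ p) {D : Polynomial ℂ}
    (hD : ∀ m, D.coeff m = deC p q (vc p q a) m) :
    ∑ i ∈ Finset.range (k+1), D.coeff i * a (k - i) = nuC p q (vc p q a) k := by
  unfold nuC
  refine Finset.sum_congr rfl fun i hi => ?_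
  rw [hD i, czv_vc p q a (by omega)]

lemma isPadeAt_construct (p q : ℕ) (a : ℕ → ℂ)
    (hdet : (Mm p q (vc p q a)).det ≠ 0) :
    IsPadeAt a p q (NuP p q (vc p q a)) (DeP p q (vc p q a)) := by
  refine ⟨natDegree_NuP_le p q _, natDegree_DeP_le p q _, by rw [coeff_DeP]; rfl, ?_⟩
  intro k hk
  rcases le_or_gt k p with hkp | hkp
  · rw [coeff_NuP, if_pos hkp, sum_eq_nuC p q a hkp (coeff_DeP p q _)]
  · have hq0 : 0 < q := by omega
    set r : Fin q := ⟨k - p - 1, by omega⟩ with hr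
    have hkr : k = p+1+(r:ℕ) := by rw [hr]; simp; omega
    rw [coeff_NuP, if_neg (by omega)]
    rw [hkr, row_sum p q a (by rw [coeff_DeP]; rfl) (coeff_DeP_succ p q _)
      (fun j hj => by rw [coeff_DeP, deC_hi p q _ hj]) r]
    have hmv := congrFun (Mm_mulVec_dv p q _ hdet) r
    rw [mulVec_apply'] at hmv
    rw [hmv, bv_vc, add_neg_cancel]

lemma pade_unique (p q : ℕ) (a : ℕ → ℂ) (hdet : (Mm p q (vc p q a)).det ≠ 0)
    {Nu De : Polynomial ℂ} (h : IsPadeAt a p q Nu De) :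
    Nu = NuP p q (vc p q a) ∧ De = DeP p q (vc p q a) := by
  obtain ⟨hN, hD, hD0, heq⟩ := h
  have hDhi : ∀ j : ℕ, q < j → De.coeff j = 0 := fun j hj =>
    Polynomial.coeff_eq_zero_of_natDegree_lt (lt_of_le_of_lt hD hj)
  have hrow : (Mm p q (vc p q a)).mulVec (fun j : Fin q => De.coeff ((j:ℕ)+1))
      = fun r => - bv p q (vc p q a) r := by
    funext r
    have hrq : (r:ℕ) < q := r.isLt
    have h1 := heq (p+1+(r:ℕ)) (by omega)
    rw [row_sum p q a hD0 (fun j => rfl) hDhi r,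
      Polynomial.coeff_eq_zero_of_natDegree_lt (by omega : Nu.natDegree < p+1+(r:ℕ))] at h1
    rw [mulVec_apply', bv_vc]
    linear_combination h1
  have hdv : (fun j : Fin q => De.coeff ((j:ℕ)+1)) = dv p q (vc p q a) :=
    dv_unique p q _ hdet hrow
  have hDe : De = DeP p q (vc p q a) := by
    ext m
    rw [coeff_DeP]
    match m with
    | 0 => rw [hD0, deC_zero]
    | Nat.succ m =>
      by_cases hm : m < q
      · have h2 := congrFun hdv ⟨m, hm⟩
        simp only at h2
        rw [h2]
        unfold deC
        rw [if_neg (Nat.succ_ne_zero _), dif_pos (by simp [hm])]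
        congr 1
      · rw [hDhi (m+1) (by omega), deC_hi p q _ (by omega)]
  refine ⟨?_, hDe⟩
  ext m
  rcases le_or_gt m p with hm | hm
  · rw [← heq m (by omega), coeff_NuP, if_pos hm]
    exact sum_eq_nuC p q a hm (fun i => by rw [hDe, coeff_DeP]) -- fix below
  · rw [Polynomial.coeff_eq_zero_of_natDegree_lt (lt_of_le_of_lt hN hm), coeff_NuP,
      if_neg (by omega)]

open Metric in
lemma abs_taylorCoeff_le {u : ℂ → ℂ} {ζ : ℂ} {r C : ℝ} (hr : 0 < r)
    (hu : DifferentiableOn ℂ u (closedBall ζ r))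
    (hC : ∀ z ∈ closedBall ζ r, ‖u z‖ ≤ C) (n : ℕ) :
    ‖taylorCoeff u ζ n‖ ≤ C / r ^ n := by
  lift r to NNReal using hr.le with R hR
  have hR0 : 0 < R := by exact_mod_cast hr
  have hP : HasFPowerSeriesOnBall u (cauchyPowerSeries u ζ R) ζ R :=
    hu.hasFPowerSeriesOnBall hR0
  have hco : taylorCoeff u ζ n = (cauchyPowerSeries u ζ R).coeff n := by
    have h1 := hP.factorial_smul (1:ℂ) n
    unfold taylorCoeff
    rw [iteratedDeriv_eq_iteratedFDeriv, ← h1]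
    have h2 : (cauchyPowerSeries u ζ (R:ℝ)) n (fun _ => (1:ℂ))
        = (cauchyPowerSeries u ζ (R:ℝ)).coeff n := rfl
    rw [h2, nsmul_eq_mul, mul_div_cancel_left₀]
    exact_mod_cast Nat.factorial_ne_zero n
  have hnorm : ‖(cauchyPowerSeries u ζ (R:ℝ)).coeff n‖ ≤ C / (R:ℝ) ^ n := by
    have hb := norm_cauchyPowerSeries_le u ζ (R:ℝ) n
    rw [FormalMultilinearSeries.norm_apply_eq_norm_coef] at hb
    have hcont : Continuous fun θ : ℝ => ‖u (circleMap ζ (R:ℝ) θ)‖ := by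
      have hmaps : ∀ θ : ℝ, circleMap ζ (R:ℝ) θ ∈ closedBall ζ (R:ℝ) := fun θ =>
        sphere_subset_closedBall (circleMap_mem_sphere ζ (by exact_mod_cast hR0.le) θ)
      exact ((hu.continuousOn.comp_continuous (continuous_circleMap ζ (R:ℝ)) hmaps)).norm
    have hInt : (∫ θ : ℝ in (0:ℝ)..2 * Real.pi, ‖u (circleMap ζ (R:ℝ) θ)‖)
        ≤ (2 * Real.pi) * C := by
      have h2 : (∫ θ : ℝ in (0:ℝ)..2 * Real.pi, ‖u (circleMap ζ (R:ℝ) θ)‖)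
          ≤ ∫ _θ : ℝ in (0:ℝ)..2 * Real.pi, C := by
        refine intervalIntegral.integral_mono_on Real.two_pi_pos.le
          (hcont.intervalIntegrable _ _) intervalIntegrable_const ?_
        intro θ _
        exact hC _ (sphere_subset_closedBall (circleMap_mem_sphere ζ (by exact_mod_cast hR0.le) θ))
      simpa using h2
    have hCpos : 0 ≤ C := le_trans (norm_nonneg _) (hC ζ (mem_closedBall_self hr.le))
    calc ‖(cauchyPowerSeries u ζ (R:ℝ)).coeff n‖
        ≤ ((2 * Real.pi)⁻¹ * ∫ θ : ℝ in (0:ℝ)..2 * Real.pi, ‖u (circleMap ζ (R:ℝ) θ)‖)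
            * |(R:ℝ)|⁻¹ ^ n := hb
      _ ≤ ((2 * Real.pi)⁻¹ * ((2 * Real.pi) * C)) * |(R:ℝ)|⁻¹ ^ n := by
          have h1 : (0:ℝ) ≤ (2 * Real.pi)⁻¹ := by positivity
          have h2 : (0:ℝ) ≤ |(R:ℝ)|⁻¹ ^ n := by positivity
          exact mul_le_mul_of_nonneg_right (mul_le_mul_of_nonneg_left hInt h1) h2
      _ = C / (R:ℝ) ^ n := by
          rw [abs_of_nonneg (by exact_mod_cast hR0.le : (0:ℝ) ≤ (R:ℝ))]
          have hRne : (R:ℝ) ≠ 0 := by exact_mod_cast hR0.ne'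
          field_simp
          rw [one_div, inv_pow, mul_assoc, inv_mul_cancel₀ (pow_ne_zero _ hRne), mul_one]
  rw [hco]
  exact_mod_cast hnorm

lemma taylorCoeff_sub {Ω : Set ℂ} (hΩ : IsOpen Ω) {f g : ℂ → ℂ}
    (hf : DifferentiableOn ℂ f Ω) (hg : DifferentiableOn ℂ g Ω) {ζ : ℂ} (hζ : ζ ∈ Ω) (n : ℕ) :
    taylorCoeff (fun z => f z - g z) ζ n = taylorCoeff f ζ n - taylorCoeff g ζ n := by
  unfold taylorCoeff
  have e : ∀ h : ℂ → ℂ, iteratedDeriv n h ζ = iteratedDerivWithin n h Ω ζ := by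
    intro h
    rw [iteratedDeriv, iteratedDerivWithin, iteratedFDerivWithin_of_isOpen n hΩ hζ]
  rw [e, e, e]
  rw [show (fun z => f z - g z) = f - g from rfl]
  rw [iteratedDerivWithin_sub hζ hΩ.uniqueDiffOn ((hf.contDiffOn hΩ).contDiffWithinAt hζ) ((hg.contDiffOn hΩ).contDiffWithinAt hζ)]
  rw [sub_div]

lemma continuousOn_taylorCoeff {Ω : Set ℂ} (hΩ : IsOpen Ω) {g : ℂ → ℂ}
    (hg : DifferentiableOn ℂ g Ω) (k : ℕ) :
    ContinuousOn (fun ζ => taylorCoeff g ζ k) Ω := by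
  have h : ∀ m : ℕ, AnalyticOnNhd ℂ (deriv^[m] g) Ω := by
    intro m
    induction m with
    | zero => exact hg.analyticOnNhd hΩ
    | succ m ih =>
      rw [Function.iterate_succ']
      exact ih.deriv
  unfold taylorCoeff
  rw [iteratedDeriv_eq_iterate]
  exact ((h k).continuousOn).div_const _

lemma continuous_czv (p q : ℕ) (k : ℤ) :
    Continuous fun c : Fin (p+q+1) → ℂ => czv p q c k := by
  unfold czv
  by_cases h : 0 ≤ k ∧ k.toNat < p+q+1
  · simp only [dif_pos h]
    exact continuous_apply _
  · simp only [dif_neg h]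
    exact continuous_const

lemma continuous_Mm (p q : ℕ) : Continuous fun c : Fin (p+q+1) → ℂ => Mm p q c :=
  continuous_matrix fun _ _ => continuous_czv p q _

lemma continuous_detMm (p q : ℕ) :
    Continuous fun c : Fin (p+q+1) → ℂ => (Mm p q c).det :=
  (continuous_Mm p q).matrix_det

lemma continuousOn_dv (p q : ℕ) (j : Fin q) :
    ContinuousOn (fun c : Fin (p+q+1) → ℂ => dv p q c j)
      {c | (Mm p q c).det ≠ 0} := by
  have hrw : (fun c : Fin (p+q+1) → ℂ => dv p q c j)
      = fun c => (Mm p q c).det⁻¹ *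
        ∑ l, (Mm p q c).adjugate j l * (- bv p q c l) := rfl
  rw [hrw]
  apply ContinuousOn.mul
  · exact ContinuousOn.inv₀ (continuous_detMm p q).continuousOn fun c hc => hc
  · apply continuousOn_finset_sum
    intro l _
    apply ContinuousOn.mul
    · exact Continuous.continuousOn <| (continuous_apply l).comp <|
        (continuous_apply j).comp (continuous_Mm p q).matrix_adjugate
    · exact ((continuous_czv p q _).neg).continuousOn

lemma continuousOn_deC (p q : ℕ) (i : ℕ) :
    ContinuousOn (fun c : Fin (p+q+1) → ℂ => deC p q c i) {c | (Mm p q c).det ≠ 0} := by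
  unfold deC
  by_cases h0 : i = 0
  · simp only [if_pos h0]
    exact continuousOn_const
  · simp only [if_neg h0]
    by_cases h1 : i - 1 < q
    · simp only [dif_pos h1]
      exact continuousOn_dv p q _
    · simp only [dif_neg h1]
      exact continuousOn_const

lemma continuousOn_nuC (p q : ℕ) (k : ℕ) :
    ContinuousOn (fun c : Fin (p+q+1) → ℂ => nuC p q c k) {c | (Mm p q c).det ≠ 0} := by
  unfold nuC
  apply continuousOn_finset_sum
  intro i _
  exact (continuousOn_deC p q i).mul (continuous_czv p q _).continuousOn

end PadeAux

open PadeAux Metric in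
theorem stmt3 (Ω : Set ℂ) (hΩ : IsOpen Ω) (hsc : SimplyConnectedSpace Ω)
    (K L : Set ℂ) (hK : K ⊆ Ω) (hKc : IsCompact K) (hL : L ⊆ Ω) (hLc : IsCompact L)
    (s : ℕ) (hs : 1 ≤ s) (p q : ℕ) :
    HOpen Ω (ESet Ω K L s p q) := by
  have hs0 : (0:ℝ) < (s:ℝ) := by exact_mod_cast hs
  have hs1 : (0:ℝ) < 1/(s:ℝ) := by positivity
  constructor
  · exact fun g hg => hg.1
  intro g hgE
  obtain ⟨hgd, hgP⟩ := hgE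
  have hgc : ContinuousOn g Ω := hgd.continuousOn
  obtain ⟨r, hrpos, hrT⟩ := (hKc.union hLc).exists_cthickening_subset_open hΩ
    (Set.union_subset hK hL)
  have hTc : IsCompact (cthickening r (K ∪ L)) :=
    isCompact_of_isClosed_isBounded isClosed_cthickening
      ((hKc.union hLc).isBounded.cthickening)
  set Φ : ℂ → (Fin (p+q+1) → ℂ) := fun ζ => vc p q (taylorCoeff g ζ) with hΦdef
  have hΦ : ContinuousOn Φ Ω := continuousOn_pi.2 fun i => continuousOn_taylorCoeff hΩ hgd i
  have hdetg : ∀ ζ ∈ L, (Mm p q (Φ ζ)).det ≠ 0 := fun ζ hζ =>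
    (det_Mm_ne_iff p q _).2 (hgP ζ hζ).1
  set W₁ : Set (Fin (p+q+1) → ℂ) := {c | (Mm p q c).det ≠ 0} with hW₁def
  have hW₁o : IsOpen W₁ := isOpen_compl_singleton.preimage (continuous_detMm p q)
  have hS₁c : IsCompact (Φ '' L) := hLc.image_of_continuousOn (hΦ.mono hL)
  obtain ⟨ε₁, hε₁pos, hε₁⟩ := hS₁c.exists_thickening_subset_open hW₁o
    (by rintro _ ⟨ζ, hζ, rfl⟩; exact hdetg ζ hζ)
  set Dfun : (Fin (p+q+1) → ℂ) × ℂ × ℂ → ℂ :=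
    fun w => ∑ i ∈ Finset.range (q+1), deC p q w.1 i * (w.2.2 - w.2.1) ^ i with hDdef
  set Nfun : (Fin (p+q+1) → ℂ) × ℂ × ℂ → ℂ :=
    fun w => ∑ k ∈ Finset.range (p+1), nuC p q w.1 k * (w.2.2 - w.2.1) ^ k with hNdef
  have hDeval : ∀ w, Dfun w = (DeP p q w.1).eval (w.2.2 - w.2.1) := fun w =>
    (eval_DeP p q w.1 _).symm
  have hNeval : ∀ w, Nfun w = (NuP p q w.1).eval (w.2.2 - w.2.1) := fun w =>
    (eval_NuP p q w.1 _).symm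
  set V₁ : Set ((Fin (p+q+1) → ℂ) × ℂ × ℂ) := {w | (Mm p q w.1).det ≠ 0} with hV₁def
  have hV₁o : IsOpen V₁ :=
    isOpen_compl_singleton.preimage ((continuous_detMm p q).comp continuous_fst)
  have hsub : Continuous fun w : (Fin (p+q+1) → ℂ) × ℂ × ℂ => w.2.2 - w.2.1 :=
    (continuous_snd.comp continuous_snd).sub (continuous_fst.comp continuous_snd)
  have hDc : ContinuousOn Dfun V₁ := by
    apply continuousOn_finset_sum
    intro i _
    exact (((continuousOn_deC p q i).comp continuous_fst.continuousOn fun w hw => hw).mul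
      (hsub.pow i).continuousOn)
  have hNc : ContinuousOn Nfun V₁ := by
    apply continuousOn_finset_sum
    intro k _
    exact (((continuousOn_nuC p q k).comp continuous_fst.continuousOn fun w hw => hw).mul
      (hsub.pow k).continuousOn)
  set V₂ := V₁ ∩ Dfun ⁻¹' {(0:ℂ)}ᶜ with hV₂def
  have hV₂o : IsOpen V₂ := hDc.isOpen_inter_preimage hV₁o isOpen_compl_singleton
  set V₃ := V₂ ∩ {w : (Fin (p+q+1) → ℂ) × ℂ × ℂ | w.2.2 ∈ Ω} with hV₃def
  have hV₃o : IsOpen V₃ := hV₂o.inter (hΩ.preimage (continuous_snd.comp continuous_snd))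
  set err : (Fin (p+q+1) → ℂ) × ℂ × ℂ → ℝ :=
    fun w => ‖Nfun w / Dfun w - g w.2.2‖ with herrdef
  have herrc : ContinuousOn err V₃ := by
    apply continuous_norm.comp_continuousOn
    apply ContinuousOn.sub
    · exact (hNc.mono fun w hw => hw.1.1).div (hDc.mono fun w hw => hw.1.1)
        fun w hw => hw.1.2
    · exact hgc.comp (continuous_snd.comp continuous_snd).continuousOn fun w hw => hw.2
  set m2 : ℂ × ℂ → (Fin (p+q+1) → ℂ) × ℂ × ℂ := fun y => (Φ y.1, y.1, y.2) with hm2def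
  have hm2c : ContinuousOn m2 (L ×ˢ K) := by
    refine ContinuousOn.prodMk ?_ (Continuous.continuousOn (by fun_prop))
    exact (hΦ.mono hL).comp continuous_fst.continuousOn fun y hy => hy.1
  have hS₂c : IsCompact (m2 '' (L ×ˢ K)) := (hLc.prod hKc).image_of_continuousOn hm2c
  have hS₂good : ∀ w ∈ m2 '' (L ×ˢ K), w ∈ V₃ ∧ err w < 1/(s:ℝ) := by
    rintro _ ⟨⟨ζ, z⟩, ⟨hζ, hz⟩, rfl⟩
    have hdet := hdetg ζ hζ
    obtain ⟨Nu, De, hIs, hDne, herr⟩ := (hgP ζ hζ).2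
    obtain ⟨hNu, hDe⟩ := pade_unique p q _ hdet hIs
    have hDv : Dfun (m2 (ζ, z)) = De.eval (z - ζ) := by
      rw [hDeval, hm2def, hΦdef]
      rw [hDe]
    have hNv : Nfun (m2 (ζ, z)) = Nu.eval (z - ζ) := by
      rw [hNeval, hm2def, hΦdef]
      rw [hNu]
    refine ⟨⟨⟨hdet, ?_⟩, hK hz⟩, ?_⟩
    · simp only [Set.mem_preimage, Set.mem_compl_iff, Set.mem_singleton_iff]
      rw [hDv]
      exact hDne z hz
    · show ‖Nfun (m2 (ζ,z)) / Dfun (m2 (ζ,z)) - g (m2 (ζ,z)).2.2‖ < 1/(s:ℝ)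
      rw [hNv, hDv]
      exact herr z hz
  obtain ⟨θ, hθpos, hθlt, hθS⟩ : ∃ θ : ℝ, 0 < θ ∧ θ < 1/(s:ℝ) ∧
      ∀ w ∈ m2 '' (L ×ˢ K), err w < θ := by
    rcases (m2 '' (L ×ˢ K)).eq_empty_or_nonempty with hS | hS
    · refine ⟨(1/(s:ℝ))/2, by positivity, half_lt_self hs1, ?_⟩
      simp [hS]
    · obtain ⟨w₀, hw₀S, hmax⟩ := hS₂c.exists_isMaxOn hS
        (herrc.mono fun w hw => (hS₂good w hw).1)
      have h₀ : err w₀ < 1/(s:ℝ) := (hS₂good w₀ hw₀S).2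
      have h₀0 : (0:ℝ) ≤ err w₀ := norm_nonneg _
      refine ⟨(err w₀ + 1/(s:ℝ))/2, by linarith, by linarith, fun w hw => ?_⟩
      have hle : err w ≤ err w₀ := hmax hw
      linarith
  set W₂ := V₃ ∩ err ⁻¹' (Set.Iio θ) with hW₂def
  have hW₂o : IsOpen W₂ := herrc.isOpen_inter_preimage hV₃o isOpen_Iio
  obtain ⟨ε₂, hε₂pos, hε₂⟩ := hS₂c.exists_thickening_subset_open hW₂o
    (fun w hw => ⟨(hS₂good w hw).1, hθS w hw⟩)
  set B : ℝ := (max 1 r⁻¹) ^ (p+q) with hBdef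
  have hB1 : (1:ℝ) ≤ B := one_le_pow₀ (le_max_left 1 _)
  have hB0 : (0:ℝ) < B := lt_of_lt_of_le one_pos hB1
  set δ : ℝ := min (min ε₁ ε₂ / (2*B)) ((1/(s:ℝ) - θ)/2) with hδdef
  have hδpos : 0 < δ := by
    apply lt_min
    · have : 0 < min ε₁ ε₂ := lt_min hε₁pos hε₂pos
      positivity
    · linarith
  refine ⟨cthickening r (K ∪ L), hrT, hTc, δ, hδpos, ?_⟩
  intro f hfd hclose
  have hcoeff : ∀ ζ ∈ L, dist (vc p q (taylorCoeff f ζ)) (Φ ζ) ≤ min ε₁ ε₂ / 2 := by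
    intro ζ hζ
    have hball : closedBall ζ r ⊆ cthickening r (K ∪ L) :=
      closedBall_subset_cthickening (Set.mem_union_right K hζ) r
    have hu : DifferentiableOn ℂ (fun z => f z - g z) (closedBall ζ r) :=
      (hfd.sub hgd).mono fun z hz => hrT (hball hz)
    have hub : ∀ z ∈ closedBall ζ r, ‖(fun z => f z - g z) z‖ ≤ δ :=
      fun z hz => (hclose z (hball hz)).le
    have hmin2 : (0:ℝ) ≤ min ε₁ ε₂ / 2 := by
      have : 0 < min ε₁ ε₂ := lt_min hε₁pos hε₂pos
      positivity
    rw [dist_pi_le_iff hmin2]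
    intro i
    have hb := abs_taylorCoeff_le hrpos hu hub (i : ℕ)
    rw [taylorCoeff_sub hΩ hfd hgd (hrT (hball (mem_closedBall_self hrpos.le)))] at hb
    have hd : dist (vc p q (taylorCoeff f ζ) i) (Φ ζ i)
        = ‖taylorCoeff f ζ i - taylorCoeff g ζ i‖ := by
      rw [hΦdef]
      exact Complex.dist_eq _ _
    rw [hd]
    have h1 : δ / r ^ (i:ℕ) ≤ δ * B := by
      rw [div_eq_mul_inv, ← inv_pow]
      apply mul_le_mul_of_nonneg_left _ hδpos.le
      calc (r⁻¹) ^ (i:ℕ) ≤ (max 1 r⁻¹) ^ (i:ℕ) :=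
            pow_le_pow_left₀ (by positivity) (le_max_right _ _) _
        _ ≤ (max 1 r⁻¹) ^ (p+q) :=
            pow_le_pow_right₀ (le_max_left _ _) (by have := i.isLt; omega)
    have h2 : δ * B ≤ min ε₁ ε₂ / 2 := by
      have hδle : δ ≤ min ε₁ ε₂ / (2*B) := min_le_left _ _
      calc δ * B ≤ (min ε₁ ε₂ / (2*B)) * B := mul_le_mul_of_nonneg_right hδle hB0.le
        _ = min ε₁ ε₂ / 2 := by field_simp
    exact le_trans hb (le_trans h1 h2)
  refine ⟨hfd, fun ζ hζ => ?_⟩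
  have hmemW₁ : vc p q (taylorCoeff f ζ) ∈ W₁ := by
    apply hε₁
    rw [Metric.mem_thickening_iff]
    refine ⟨Φ ζ, ⟨ζ, hζ, rfl⟩, ?_⟩
    have hm : min ε₁ ε₂ / 2 < ε₁ := by
      have := min_le_left ε₁ ε₂; linarith
    exact lt_of_le_of_lt (hcoeff ζ hζ) hm
  have hdetf : (Mm p q (vc p q (taylorCoeff f ζ))).det ≠ 0 := hmemW₁
  have hwW₂ : ∀ z ∈ K, ((vc p q (taylorCoeff f ζ), ζ, z) :
      (Fin (p+q+1) → ℂ) × ℂ × ℂ) ∈ W₂ := by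
    intro z hz
    apply hε₂
    rw [Metric.mem_thickening_iff]
    refine ⟨m2 (ζ, z), ⟨(ζ,z), ⟨hζ, hz⟩, rfl⟩, ?_⟩
    have hm : min ε₁ ε₂ / 2 < ε₂ := by
      have := min_le_right ε₁ ε₂; linarith
    refine lt_of_le_of_lt ?_ hm
    rw [hm2def, Prod.dist_eq]
    refine max_le (hcoeff ζ hζ) ?_
    rw [dist_self]
    have : 0 < min ε₁ ε₂ := lt_min hε₁pos hε₂pos
    positivity
  constructor
  · exact (det_Mm_ne_iff p q _).1 hdetf
  · refine ⟨NuP p q (vc p q (taylorCoeff f ζ)), DeP p q (vc p q (taylorCoeff f ζ)),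
      isPadeAt_construct p q _ hdetf, fun z hz => ?_, fun z hz => ?_⟩
    · have hw := hwW₂ z hz
      have hD := hw.1.1.2
      simp only [Set.mem_preimage, Set.mem_compl_iff, Set.mem_singleton_iff] at hD
      rw [hDeval] at hD
      exact hD
    · have hw := hwW₂ z hz
      have herrw : err ((vc p q (taylorCoeff f ζ), ζ, z)) < θ := hw.2
      have heq : err ((vc p q (taylorCoeff f ζ), ζ, z))
          = ‖(NuP p q (vc p q (taylorCoeff f ζ))).eval (z - ζ) /
              (DeP p q (vc p q (taylorCoeff f ζ))).eval (z - ζ) - g z‖ := by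
        simp only [herrdef, hNeval, hDeval]
      rw [heq] at herrw
      have hgz : ‖g z - f z‖ < δ := by
        rw [norm_sub_rev]
        exact hclose z (self_subset_cthickening _ (Set.mem_union_left L hz))
      have htri := norm_sub_le_norm_sub_add_norm_sub
        ((NuP p q (vc p q (taylorCoeff f ζ))).eval (z - ζ) /
          (DeP p q (vc p q (taylorCoeff f ζ))).eval (z - ζ)) (g z) (f z)
      have hδ2 : δ ≤ (1/(s:ℝ) - θ)/2 := min_le_right _ _
      calc ‖Polynomial.eval (z - ζ) (NuP p q (vc p q (taylorCoeff f ζ))) /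
            Polynomial.eval (z - ζ) (DeP p q (vc p q (taylorCoeff f ζ))) - f z‖
          ≤ _ := htri
        _ < θ + δ := by exact add_lt_add herrw hgz
        _ < 1/(s:ℝ) := by linarith
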